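/- arXiv:1212.2052 — 3 statements merged into one kernel-verified Lean document; each statement's English description precedes it below -/
import Mathlib

section
/- Let V be an n-dimensional real Hilbert space, ε > 0, L > 0, T a bilinear form on V with |T| ≤ L, and let {e₁,...,e_k} ⊂ V be an ε-orthogonal collection (⟨eᵢ,eⱼ⟩ = δᵢⱼ ± ε). If ||T|² − Σ_{i,j=1}^k (T(eᵢ,eⱼ))²| < ε, then |Tr T − Σ_{i=1}^k T(eᵢ,eᵢ)| < Ψ(ε; n, L), where Ψ(ε; n, L) → 0 as ε → 0 for fixed n, L. -/
open Filter Topology Matrix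

/-- The squared Hilbert–Schmidt norm of a bilinear form on `EuclideanSpace ℝ (Fin n)`,
computed via the standard orthonormal basis. -/
noncomputable def bilinNormSq (n : ℕ)
    (T : EuclideanSpace ℝ (Fin n) →ₗ[ℝ] EuclideanSpace ℝ (Fin n) →ₗ[ℝ] ℝ) : ℝ :=
  ∑ i : Fin n, ∑ j : Fin n,
    (T (EuclideanSpace.single i (1 : ℝ)) (EuclideanSpace.single j (1 : ℝ))) ^ 2

/-- The trace of a bilinear form on `EuclideanSpace ℝ (Fin n)` with respect to the
inner product. -/
noncomputable def bilinTrace (n : ℕ)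
    (T : EuclideanSpace ℝ (Fin n) →ₗ[ℝ] EuclideanSpace ℝ (Fin n) →ₗ[ℝ] ℝ) : ℝ :=
  ∑ i : Fin n, T (EuclideanSpace.single i (1 : ℝ)) (EuclideanSpace.single i (1 : ℝ))

section Aux
variable {m k l : ℕ}

noncomputable def fsq (A : Matrix (Fin m) (Fin k) ℝ) : ℝ := ∑ i, ∑ j, (A i j)^2
noncomputable def nrm (A : Matrix (Fin m) (Fin k) ℝ) : ℝ := Real.sqrt (fsq A)

lemma fsq_nonneg (A : Matrix (Fin m) (Fin k) ℝ) : 0 ≤ fsq A :=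
  Finset.sum_nonneg fun _ _ => Finset.sum_nonneg fun _ _ => sq_nonneg _

lemma nrm_nonneg (A : Matrix (Fin m) (Fin k) ℝ) : 0 ≤ nrm A := Real.sqrt_nonneg _

lemma nrm_sq (A : Matrix (Fin m) (Fin k) ℝ) : nrm A ^ 2 = fsq A :=
  Real.sq_sqrt (fsq_nonneg A)

lemma fsq_eq_trace (A : Matrix (Fin m) (Fin k) ℝ) : fsq A = trace (Aᵀ * A) := by
  unfold fsq
  rw [Matrix.trace, Finset.sum_comm]
  congr 1; ext i
  simp [Matrix.diag, Matrix.mul_apply, sq]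

noncomputable def toE (A : Matrix (Fin m) (Fin k) ℝ) : EuclideanSpace ℝ (Fin m × Fin k) :=
  (WithLp.equiv 2 _).symm (fun p => A p.1 p.2)

lemma toE_sub (A B : Matrix (Fin m) (Fin k) ℝ) : toE (A - B) = toE A - toE B := rfl

lemma norm_toE (A : Matrix (Fin m) (Fin k) ℝ) : ‖toE A‖ = nrm A := by
  rw [EuclideanSpace.norm_eq, nrm, fsq]
  congr 1
  rw [Fintype.sum_prod_type]
  exact Finset.sum_congr rfl fun i _ => Finset.sum_congr rfl fun j _ => by simp [toE, sq_abs]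

lemma nrm_sub_le (A B C : Matrix (Fin m) (Fin k) ℝ) : nrm (A - C) ≤ nrm (A - B) + nrm (B - C) := by
  rw [← norm_toE, ← norm_toE, ← norm_toE, toE_sub, toE_sub, toE_sub]
  exact norm_sub_le_norm_sub_add_norm_sub _ _ _

lemma nrm_sub_comm (A B : Matrix (Fin m) (Fin k) ℝ) : nrm (A - B) = nrm (B - A) := by
  rw [← norm_toE, ← norm_toE, toE_sub, toE_sub]; exact norm_sub_rev _ _

lemma abs_nrm_sub_nrm_le (A B : Matrix (Fin m) (Fin k) ℝ) : |nrm A - nrm B| ≤ nrm (A - B) := by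
  rw [← norm_toE, ← norm_toE, ← norm_toE, toE_sub]; exact abs_norm_sub_norm_le _ _

lemma fsq_mul_le (A : Matrix (Fin m) (Fin k) ℝ) (B : Matrix (Fin k) (Fin l) ℝ) :
    fsq (A * B) ≤ fsq A * fsq B := by
  unfold fsq
  calc ∑ i, ∑ j, ((A * B) i j)^2
      ≤ ∑ i, ∑ j, (∑ a, (A i a)^2) * (∑ a, (B a j)^2) := by
        refine Finset.sum_le_sum fun i _ => Finset.sum_le_sum fun j _ => ?_
        rw [Matrix.mul_apply]
        exact Finset.sum_mul_sq_le_sq_mul_sq _ _ _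
    _ = (∑ i, ∑ a, (A i a)^2) * (∑ j, ∑ a, (B a j)^2) := by
        rw [Finset.sum_mul_sum]
    _ = _ := by rw [Finset.sum_comm (t := (Finset.univ : Finset (Fin l)))]

lemma nrm_mul_le (A : Matrix (Fin m) (Fin k) ℝ) (B : Matrix (Fin k) (Fin l) ℝ) :
    nrm (A * B) ≤ nrm A * nrm B := by
  rw [nrm, nrm, nrm, ← Real.sqrt_mul (fsq_nonneg A)]
  exact Real.sqrt_le_sqrt (fsq_mul_le A B)

lemma fsq_one : fsq (1 : Matrix (Fin k) (Fin k) ℝ) = k := by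
  unfold fsq
  have h : ∀ i : Fin k, ∑ j, ((1 : Matrix (Fin k) (Fin k) ℝ) i j)^2 = 1 := by
    intro i
    rw [Finset.sum_eq_single i]
    · simp [Matrix.one_apply]
    · intro j _ hji; simp [Matrix.one_apply, Ne.symm hji]
    · simp
  simp [h]

lemma nrm_one : nrm (1 : Matrix (Fin k) (Fin k) ℝ) = Real.sqrt k := by rw [nrm, fsq_one]

lemma abs_trace_le (A : Matrix (Fin k) (Fin k) ℝ) : |trace A| ≤ Real.sqrt k * nrm A := by
  have h1 : (trace A)^2 ≤ (k : ℝ) * fsq A := by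
    have h2 := Finset.sum_mul_sq_le_sq_mul_sq Finset.univ (fun i : Fin k => A i i) (fun _ => 1)
    simp only [mul_one, one_pow] at h2
    calc (trace A)^2 = (∑ i, A i i)^2 := by rw [Matrix.trace]; rfl
      _ ≤ (∑ i, (A i i)^2) * (∑ _i : Fin k, (1:ℝ)) := h2
      _ = (k : ℝ) * ∑ i, (A i i)^2 := by simp [mul_comm]
      _ ≤ (k : ℝ) * fsq A := by
          refine mul_le_mul_of_nonneg_left ?_ (by positivity)
          refine Finset.sum_le_sum fun i _ => ?_
          exact Finset.single_le_sum (f := fun j => (A i j)^2) (fun j _ => sq_nonneg _)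
            (Finset.mem_univ i)
  calc |trace A| = Real.sqrt ((trace A)^2) := (Real.sqrt_sq_eq_abs _).symm
    _ ≤ Real.sqrt ((k : ℝ) * fsq A) := Real.sqrt_le_sqrt h1
    _ = Real.sqrt k * nrm A := by rw [Real.sqrt_mul (by positivity), nrm]

lemma fsq_Qmul (Q : Matrix (Fin m) (Fin k) ℝ) (hQ : Qᵀ * Q = 1)
    (X : Matrix (Fin k) (Fin l) ℝ) : fsq (Q * X) = fsq X := by
  rw [fsq_eq_trace, fsq_eq_trace, Matrix.transpose_mul, Matrix.mul_assoc,
    ← Matrix.mul_assoc Qᵀ, hQ, Matrix.one_mul]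

lemma fsq_mulQt (Q : Matrix (Fin m) (Fin k) ℝ) (hQ : Qᵀ * Q = 1)
    (X : Matrix (Fin l) (Fin k) ℝ) : fsq (X * Qᵀ) = fsq X := by
  rw [fsq_eq_trace, fsq_eq_trace, Matrix.transpose_mul, Matrix.transpose_transpose,
    Matrix.trace_mul_comm]
  simp only [Matrix.mul_assoc]
  rw [← Matrix.mul_assoc Qᵀ Q, hQ, Matrix.one_mul, Matrix.trace_mul_comm]

lemma fsq_mul_same (R : Matrix (Fin m) (Fin m) ℝ) (hR : Rᵀ * R = R)
    (X : Matrix (Fin m) (Fin k) ℝ) : fsq (R * X) = trace (Xᵀ * (R * X)) := by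
  rw [fsq_eq_trace, Matrix.transpose_mul, Matrix.mul_assoc, ← Matrix.mul_assoc Rᵀ, hR]

lemma fsq_mul_same' (R : Matrix (Fin m) (Fin m) ℝ) (hR : R * Rᵀ = R)
    (X : Matrix (Fin k) (Fin m) ℝ) : fsq (X * R) = trace (Xᵀ * X * R) := by
  rw [fsq_eq_trace, Matrix.transpose_mul, Matrix.trace_mul_comm]
  simp only [← Matrix.mul_assoc]
  rw [Matrix.mul_assoc X R Rᵀ, hR, Matrix.trace_mul_comm]
  simp only [← Matrix.mul_assoc]

lemma oneSubP_mul (P : Matrix (Fin m) (Fin m) ℝ) (hPP : P * P = P) :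
    (1 - P) * (1 - P) = 1 - P := by
  have : (1-P) * (1-P) = 1 - P - P + P * P := by noncomm_ring
  rw [this, hPP]; abel

lemma fsq_split_left (P : Matrix (Fin m) (Fin m) ℝ) (hPt : Pᵀ = P) (hPP : P * P = P)
    (X : Matrix (Fin m) (Fin k) ℝ) : fsq X = fsq (P * X) + fsq ((1 - P) * X) := by
  have h1t : (1 - P)ᵀ = 1 - P := by rw [Matrix.transpose_sub, Matrix.transpose_one, hPt]
  rw [fsq_mul_same P (by rw [hPt, hPP]) X,
    fsq_mul_same (1-P) (by rw [h1t, oneSubP_mul P hPP]) X,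
    ← Matrix.trace_add, ← Matrix.mul_add, ← Matrix.add_mul, add_sub_cancel, Matrix.one_mul,
    fsq_eq_trace]

lemma fsq_split_right (P : Matrix (Fin m) (Fin m) ℝ) (hPt : Pᵀ = P) (hPP : P * P = P)
    (X : Matrix (Fin k) (Fin m) ℝ) : fsq X = fsq (X * P) + fsq (X * (1 - P)) := by
  have h1t : (1 - P)ᵀ = 1 - P := by rw [Matrix.transpose_sub, Matrix.transpose_one, hPt]
  rw [fsq_mul_same' P (by rw [hPt, hPP]) X,
    fsq_mul_same' (1-P) (by rw [h1t, oneSubP_mul P hPP]) X,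
    ← Matrix.trace_add, ← Matrix.mul_add, add_sub_cancel, Matrix.mul_one, fsq_eq_trace]

lemma trace_split (P : Matrix (Fin m) (Fin m) ℝ) (hPP : P * P = P)
    (X : Matrix (Fin m) (Fin m) ℝ) :
    trace X = trace (P * X * P) + trace ((1 - P) * X * (1 - P)) := by
  have h1 : trace (P * X * P) = trace (P * X) := by
    rw [Matrix.trace_mul_comm, ← Matrix.mul_assoc, hPP]
  have h2 : trace ((1 - P) * X * (1 - P)) = trace X - trace (P * X) := by
    rw [Matrix.trace_mul_comm, ← Matrix.mul_assoc, oneSubP_mul P hPP, Matrix.sub_mul,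
      Matrix.one_mul, Matrix.trace_sub]
  rw [h1, h2]; ring

lemma psd_spectral {m : ℕ} (N : Matrix (Fin m) (Fin m) ℝ) (hN : N.PosSemidef) :
    ∃ (U : Matrix (Fin m) (Fin m) ℝ) (lam : Fin m → ℝ),
      Uᵀ * U = 1 ∧ U * Uᵀ = 1 ∧ N = U * Matrix.diagonal lam * Uᵀ ∧ ∀ i, 0 ≤ lam i := by
  have hH := hN.1
  have hstar : star (hH.eigenvectorUnitary : Matrix (Fin m) (Fin m) ℝ)
      = (hH.eigenvectorUnitary : Matrix (Fin m) (Fin m) ℝ)ᵀ := by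
    rw [Matrix.star_eq_conjTranspose, Matrix.conjTranspose]; ext i j; simp
  refine ⟨hH.eigenvectorUnitary, hH.eigenvalues, ?_, ?_, ?_, fun i => hN.eigenvalues_nonneg i⟩
  · rw [← hstar]; exact Unitary.coe_star_mul_self _
  · rw [← hstar]; exact Unitary.coe_mul_star_self _
  · have h := hH.spectral_theorem
    simp only [Unitary.conjStarAlgAut_apply, Unitary.coe_star] at h
    rw [hstar] at h
    exact h

lemma fsq_diagonal (d : Fin k → ℝ) : fsq (diagonal d) = ∑ i, (d i)^2 := by
  unfold fsq
  refine Finset.sum_congr rfl fun i _ => ?_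
  rw [Finset.sum_eq_single i]
  · simp
  · intro j _ hji; simp [Matrix.diagonal_apply_ne' d hji]
  · simp

lemma transpose_mul_self_psd (E : Matrix (Fin m) (Fin k) ℝ) : (Eᵀ * E).PosSemidef := by
  have h : Eᵀ = Eᴴ := by
    rw [Matrix.conjTranspose]; ext i j; simp
  rw [h]; exact Matrix.posSemidef_conjTranspose_mul_self E

lemma self_mul_transpose_psd (E : Matrix (Fin m) (Fin k) ℝ) : (E * Eᵀ).PosSemidef := by
  have h : Eᵀ = Eᴴ := by
    rw [Matrix.conjTranspose]; ext i j; simp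
  rw [h]; exact Matrix.posSemidef_self_mul_conjTranspose E

end Aux

section Sqrt

lemma sqrt_factor {n k : ℕ} (E : Matrix (Fin n) (Fin k) ℝ)
    (hsmall : fsq (Eᵀ * E - 1) ≤ 1/4) :
    ∃ (Q : Matrix (Fin n) (Fin k) ℝ) (S : Matrix (Fin k) (Fin k) ℝ),
      Qᵀ * Q = 1 ∧ E = Q * S ∧ Sᵀ = S ∧ fsq (S - 1) ≤ fsq (Eᵀ * E - 1) := by
  obtain ⟨U, lam, hUtU, hUUt, hG, hlam⟩ := psd_spectral _ (transpose_mul_self_psd E)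
  set G := Eᵀ * E with hGdef
  have conj_sub_one : ∀ X : Matrix (Fin k) (Fin k) ℝ,
      U * X * Uᵀ - 1 = U * (X - 1) * Uᵀ := by
    intro X
    rw [Matrix.mul_sub, Matrix.sub_mul, Matrix.mul_one, hUUt]
  have fsq_conj : ∀ X : Matrix (Fin k) (Fin k) ℝ, fsq (U * X * Uᵀ) = fsq X := by
    intro X
    rw [Matrix.mul_assoc, fsq_Qmul U hUtU, fsq_mulQt U hUtU]
  have conj_mul : ∀ X Y : Matrix (Fin k) (Fin k) ℝ,
      (U * X * Uᵀ) * (U * Y * Uᵀ) = U * (X * Y) * Uᵀ := by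
    intro X Y
    calc (U * X * Uᵀ) * (U * Y * Uᵀ) = U * (X * ((Uᵀ * U) * (Y * Uᵀ))) := by
          simp only [Matrix.mul_assoc]
      _ = U * (X * Y) * Uᵀ := by rw [hUtU, Matrix.one_mul]; simp only [Matrix.mul_assoc]
  have hfsqG : fsq (G - 1) = ∑ i, (lam i - 1)^2 := by
    rw [hG, conj_sub_one, fsq_conj]
    rw [show Matrix.diagonal lam - 1 = Matrix.diagonal (fun i => lam i - 1) by
      rw [← Matrix.diagonal_one, Matrix.diagonal_sub], fsq_diagonal]
  have heig : ∀ i, (lam i - 1)^2 ≤ 1/4 := by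
    intro i
    calc (lam i - 1)^2 ≤ ∑ j, (lam j - 1)^2 :=
          Finset.single_le_sum (f := fun j => (lam j - 1)^2) (fun j _ => sq_nonneg _)
            (Finset.mem_univ i)
      _ = fsq (G - 1) := hfsqG.symm
      _ ≤ 1/4 := hsmall
  have hpos : ∀ i, 0 < lam i := fun i => by nlinarith [heig i]
  set sl : Fin k → ℝ := fun i => Real.sqrt (lam i) with hsl
  have hslpos : ∀ i, 0 < sl i := fun i => Real.sqrt_pos.mpr (hpos i)
  have hslsq : ∀ i, sl i * sl i = lam i := fun i => Real.mul_self_sqrt (hpos i).le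
  set S : Matrix (Fin k) (Fin k) ℝ := U * Matrix.diagonal sl * Uᵀ with hS
  set Sinv : Matrix (Fin k) (Fin k) ℝ := U * Matrix.diagonal (fun i => (sl i)⁻¹) * Uᵀ with hSinv
  have hSinvS : Sinv * S = 1 := by
    rw [hSinv, hS, conj_mul, Matrix.diagonal_mul_diagonal]
    have : (fun i => (sl i)⁻¹ * sl i) = fun _ => (1:ℝ) := by
      funext i; exact inv_mul_cancel₀ (hslpos i).ne'
    rw [this, Matrix.diagonal_one, Matrix.mul_one, hUUt]
  have hSSinv : S * Sinv = 1 := by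
    rw [hSinv, hS, conj_mul, Matrix.diagonal_mul_diagonal]
    have : (fun i => sl i * (sl i)⁻¹) = fun _ => (1:ℝ) := by
      funext i; exact mul_inv_cancel₀ (hslpos i).ne'
    rw [this, Matrix.diagonal_one, Matrix.mul_one, hUUt]
  have hSS : S * S = G := by
    rw [hS, conj_mul, Matrix.diagonal_mul_diagonal,
      show (fun i => sl i * sl i) = lam from funext hslsq, hG]
  have hSt : Sᵀ = S := by
    rw [hS, Matrix.transpose_mul, Matrix.transpose_mul, Matrix.transpose_transpose,
      Matrix.diagonal_transpose, Matrix.mul_assoc]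
  have hSinvT : Sinvᵀ = Sinv := by
    rw [hSinv, Matrix.transpose_mul, Matrix.transpose_mul, Matrix.transpose_transpose,
      Matrix.diagonal_transpose, Matrix.mul_assoc]
  refine ⟨E * Sinv, S, ?_, ?_, hSt, ?_⟩
  · rw [Matrix.transpose_mul, hSinvT]
    calc Sinv * Eᵀ * (E * Sinv) = Sinv * (Eᵀ * E) * Sinv := by
          simp only [Matrix.mul_assoc]
      _ = Sinv * G * Sinv := by rw [← hGdef]
      _ = (Sinv * S) * (S * Sinv) := by rw [← hSS]; simp only [Matrix.mul_assoc]
      _ = 1 := by rw [hSinvS, hSSinv, Matrix.one_mul]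
  · rw [Matrix.mul_assoc, hSinvS, Matrix.mul_one]
  · rw [hfsqG, hS, conj_sub_one, fsq_conj]
    rw [show Matrix.diagonal sl - 1 = Matrix.diagonal (fun i => sl i - 1) by
      rw [← Matrix.diagonal_one, Matrix.diagonal_sub], fsq_diagonal]
    refine Finset.sum_le_sum fun i _ => ?_
    nlinarith [hslsq i, (hslpos i).le, sq_nonneg (sl i - 1), sq_nonneg (sl i + 1)]

lemma trace_sq_le {m k : ℕ} (A : Matrix (Fin m) (Fin m) ℝ) (E : Matrix (Fin m) (Fin k) ℝ) :
    (trace (Eᵀ * A * E))^2 ≤ m * fsq (Eᵀ * A * E) := by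
  obtain ⟨U, lam, hUtU, hUUt, hM, hlam⟩ := psd_spectral _ (self_mul_transpose_psd E)
  set D := Matrix.diagonal lam with hD
  set C := Uᵀ * A * U with hC
  have trace_mul_diag : ∀ (X : Matrix (Fin m) (Fin m) ℝ) (d : Fin m → ℝ),
      trace (X * Matrix.diagonal d) = ∑ i, X i i * d i := by
    intro X d
    simp [Matrix.trace, Matrix.diag, Matrix.mul_diagonal]
  have h1 : trace (Eᵀ * A * E) = ∑ a, C a a * lam a := by
    have e1 : trace (Eᵀ * A * E) = trace (Uᵀ * A * U * D) := by
      rw [Matrix.trace_mul_comm]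
      simp only [← Matrix.mul_assoc]
      rw [hM]
      rw [Matrix.trace_mul_comm]; simp only [← Matrix.mul_assoc]
      rw [Matrix.trace_mul_comm]; simp only [← Matrix.mul_assoc]
    rw [e1, ← hC]
    exact trace_mul_diag C lam
  have hCt : Cᵀ = Uᵀ * Aᵀ * U := by
    rw [hC, Matrix.transpose_mul, Matrix.transpose_mul, Matrix.transpose_transpose,
      Matrix.mul_assoc]
  have h2 : fsq (Eᵀ * A * E) = trace (Cᵀ * D * C * D) := by
    rw [fsq_eq_trace]
    simp only [Matrix.transpose_mul, Matrix.transpose_transpose, ← Matrix.mul_assoc]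
    rw [Matrix.trace_mul_comm]; simp only [← Matrix.mul_assoc]
    rw [hM]
    rw [Matrix.trace_mul_comm]; simp only [← Matrix.mul_assoc]
    rw [Matrix.trace_mul_comm]; simp only [← Matrix.mul_assoc]
    rw [Matrix.trace_mul_comm]; simp only [← Matrix.mul_assoc]
    rw [hM]
    rw [Matrix.trace_mul_comm]; simp only [← Matrix.mul_assoc]
    rw [Matrix.trace_mul_comm]; simp only [← Matrix.mul_assoc]
    rw [hCt, hC]
    simp only [← Matrix.mul_assoc]
  have h3 : trace (Cᵀ * D * C * D) = ∑ a, ∑ b, lam a * lam b * (C b a)^2 := by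
    rw [trace_mul_diag (Cᵀ * D * C) lam]
    refine Finset.sum_congr rfl fun a _ => ?_
    have : (Cᵀ * D * C) a a = ∑ b, C b a * lam b * C b a := by
      rw [Matrix.mul_apply]
      refine Finset.sum_congr rfl fun b _ => ?_
      rw [Matrix.mul_diagonal, Matrix.transpose_apply]
    rw [this, Finset.sum_mul]
    refine Finset.sum_congr rfl fun b _ => by ring
  have h4 : (∑ a, C a a * lam a)^2 ≤ (m : ℝ) * ∑ a, (C a a * lam a)^2 := by
    have h5 := Finset.sum_mul_sq_le_sq_mul_sq Finset.univ (fun a : Fin m => C a a * lam a)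
      (fun _ => 1)
    simp only [mul_one, one_pow] at h5
    calc (∑ a, C a a * lam a)^2 ≤ (∑ a, (C a a * lam a)^2) * (∑ _a : Fin m, (1:ℝ)) := h5
      _ = (m : ℝ) * ∑ a, (C a a * lam a)^2 := by simp [mul_comm]
  have h6 : ∑ a, (C a a * lam a)^2 ≤ ∑ a, ∑ b, lam a * lam b * (C b a)^2 := by
    refine Finset.sum_le_sum fun a _ => ?_
    have := Finset.single_le_sum (f := fun b => lam a * lam b * (C b a)^2)
      (fun b _ => mul_nonneg (mul_nonneg (hlam a) (hlam b)) (sq_nonneg _)) (Finset.mem_univ a)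
    calc (C a a * lam a)^2 = lam a * lam a * (C a a)^2 := by ring
      _ ≤ ∑ b, lam a * lam b * (C b a)^2 := this
  rw [h1, h2, h3]
  calc (∑ a, C a a * lam a)^2 ≤ (m:ℝ) * ∑ a, (C a a * lam a)^2 := h4
    _ ≤ (m:ℝ) * ∑ a, ∑ b, lam a * lam b * (C b a)^2 :=
        mul_le_mul_of_nonneg_left h6 (by positivity)

end Sqrt

lemma inner_euclidean {n : ℕ} (x y : EuclideanSpace ℝ (Fin n)) :
    (inner ℝ x y : ℝ) = ∑ a, x a * y a := by
  rw [PiLp.inner_apply]; simp [mul_comm]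

lemma card_le_of_eps_orth {n k : ℕ} {ε : ℝ} (hε : 0 < ε) (hεn : (n + 1 : ℝ) * ε < 1)
    (e : Fin k → EuclideanSpace ℝ (Fin n))
    (he : ∀ i j : Fin k, |(inner ℝ (e i) (e j) : ℝ) - (if i = j then (1 : ℝ) else 0)| < ε) :
    k ≤ n := by
  by_contra hkn
  push_neg at hkn
  set f : Fin (n+1) → EuclideanSpace ℝ (Fin n) := fun i => e (Fin.castLE hkn i) with hf
  have hnotli : ¬ LinearIndependent ℝ f := by
    intro hli
    have := hli.fintype_card_le_finrank
    rw [finrank_euclideanSpace_fin, Fintype.card_fin] at this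
    omega
  rw [Fintype.not_linearIndependent_iff] at hnotli
  obtain ⟨g, hg0, i0, hgi0⟩ := hnotli
  have hsum : (0:ℝ) = ∑ i, ∑ j, g i * g j * (inner ℝ (f i) (f j) : ℝ) := by
    have h0 : (inner ℝ (∑ i, g i • f i) (∑ j, g j • f j) : ℝ) = 0 := by rw [hg0]; simp
    rw [sum_inner] at h0
    rw [← h0]
    refine Finset.sum_congr rfl fun i _ => ?_
    rw [inner_sum]
    refine Finset.sum_congr rfl fun j _ => ?_
    rw [real_inner_smul_left, real_inner_smul_right]
    ring
  set d : Fin (n+1) → Fin (n+1) → ℝ :=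
    fun i j => (inner ℝ (f i) (f j) : ℝ) - (if i = j then (1:ℝ) else 0) with hd
  have hde : ∀ i j, |d i j| < ε := by
    intro i j
    have h := he (Fin.castLE hkn i) (Fin.castLE hkn j)
    rw [hd]
    simpa [hf, Fin.castLE_inj] using h
  set S := ∑ i, (g i)^2 with hSdef
  have hsplit : ∑ i, ∑ j, g i * g j * (inner ℝ (f i) (f j) : ℝ)
      = S + ∑ i, ∑ j, g i * g j * d i j := by
    rw [hSdef, ← Finset.sum_add_distrib]
    refine Finset.sum_congr rfl fun i _ => ?_
    have hterm : ∀ j, g i * g j * (inner ℝ (f i) (f j) : ℝ)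
        = g i * g j * (if i = j then (1:ℝ) else 0) + g i * g j * d i j := by
      intro j; rw [hd]; ring
    rw [Finset.sum_congr rfl (fun j _ => hterm j), Finset.sum_add_distrib]
    congr 1
    rw [Finset.sum_eq_single i]
    · simp [sq]
    · intro j _ hji; simp [Ne.symm hji]
    · simp
  set R := ∑ i, ∑ j, g i * g j * d i j with hRdef
  have hR : |R| ≤ ε * (∑ i, |g i|)^2 := by
    have step1 : |R| ≤ ∑ i, ∑ j, |g i| * |g j| * ε := by
      refine (Finset.abs_sum_le_sum_abs _ _).trans ?_
      refine Finset.sum_le_sum fun i _ => ?_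
      refine (Finset.abs_sum_le_sum_abs _ _).trans ?_
      refine Finset.sum_le_sum fun j _ => ?_
      rw [abs_mul, abs_mul]
      exact mul_le_mul_of_nonneg_left (hde i j).le (by positivity)
    refine step1.trans ?_
    have : ∑ i, ∑ j, |g i| * |g j| * ε = (∑ i, |g i|) * (∑ j, |g j|) * ε := by
      rw [Finset.sum_mul_sum, Finset.sum_mul]
      exact Finset.sum_congr rfl fun i _ => by
        rw [Finset.sum_mul]
    rw [this, sq]; ring_nf; exact le_refl _
  have hCS : (∑ i, |g i|)^2 ≤ (n+1 : ℝ) * S := by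
    have h5 := Finset.sum_mul_sq_le_sq_mul_sq Finset.univ (fun i : Fin (n+1) => |g i|)
      (fun _ => 1)
    simp only [mul_one, one_pow, sq_abs] at h5
    calc (∑ i, |g i|)^2 ≤ S * (∑ _i : Fin (n+1), (1:ℝ)) := h5
      _ = (n+1 : ℝ) * S := by simp [mul_comm]
  have hSpos : 0 < S := by
    refine Finset.sum_pos' (fun i _ => sq_nonneg _) ⟨i0, Finset.mem_univ _, ?_⟩
    have := abs_pos.mpr hgi0
    calc (0:ℝ) < |g i0|^2 := by positivity
      _ = (g i0)^2 := sq_abs _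
  have hRlow : -(ε * (∑ i, |g i|)^2) ≤ R := neg_le_of_abs_le hR
  have habs : (0:ℝ) = S + R := by rw [hsum, hsplit]
  nlinarith [hεn, hSpos, hCS, hRlow, hε.le, mul_le_mul_of_nonneg_left hCS hε.le]

lemma euclidean_decomp {n : ℕ} (x : EuclideanSpace ℝ (Fin n)) :
    x = ∑ i, x i • EuclideanSpace.single i (1:ℝ) := by
  ext a
  rw [WithLp.ofLp_sum, Finset.sum_apply]
  rw [Finset.sum_eq_single a]
  · simp [EuclideanSpace.single_apply]
  · intro j _ hja
    simp only [PiLp.smul_apply, EuclideanSpace.single_apply, smul_eq_mul]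
    rw [if_neg (fun h => absurd h.symm hja), mul_zero]
  · simp

lemma bilin_apply {n : ℕ} (T : EuclideanSpace ℝ (Fin n) →ₗ[ℝ] EuclideanSpace ℝ (Fin n) →ₗ[ℝ] ℝ)
    (x y : EuclideanSpace ℝ (Fin n)) :
    T x y = ∑ i, ∑ j, x i * y j
      * T (EuclideanSpace.single i (1:ℝ)) (EuclideanSpace.single j (1:ℝ)) := by
  calc T x y = ∑ i, x i * T (EuclideanSpace.single i (1:ℝ)) y := by
        conv_lhs => rw [euclidean_decomp x]
        rw [map_sum, LinearMap.sum_apply]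
        exact Finset.sum_congr rfl fun i _ => by
          rw [_root_.map_smul, LinearMap.smul_apply, smul_eq_mul]
    _ = ∑ i, ∑ j, x i * y j
      * T (EuclideanSpace.single i (1:ℝ)) (EuclideanSpace.single j (1:ℝ)) := by
        refine Finset.sum_congr rfl fun i _ => ?_
        conv_lhs => rw [euclidean_decomp y]
        rw [map_sum, Finset.mul_sum]
        refine Finset.sum_congr rfl fun j _ => ?_
        rw [_root_.map_smul, smul_eq_mul]
        ring

set_option maxHeartbeats 2000000 in
theorem stmt1 (n : ℕ) (L : ℝ) (hL : 0 < L) :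
    ∃ Ψ : ℝ → ℝ, Tendsto Ψ (𝓝[>] (0 : ℝ)) (𝓝 0) ∧
      ∀ ε : ℝ, 0 < ε →
        ∀ T : EuclideanSpace ℝ (Fin n) →ₗ[ℝ] EuclideanSpace ℝ (Fin n) →ₗ[ℝ] ℝ,
          bilinNormSq n T ≤ L ^ 2 →
          ∀ (k : ℕ) (e : Fin k → EuclideanSpace ℝ (Fin n)),
            (∀ i j : Fin k,
              |(inner ℝ (e i) (e j) : ℝ) - (if i = j then (1 : ℝ) else 0)| < ε) →
            |bilinNormSq n T - ∑ i : Fin k, ∑ j : Fin k, (T (e i) (e j)) ^ 2| < ε →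
            |bilinTrace n T - ∑ i : Fin k, T (e i) (e i)| < Ψ ε := by
  set ε₀ : ℝ := 1 / (2 * ((n:ℝ) + 1)) with hε₀
  have hε₀pos : 0 < ε₀ := by rw [hε₀]; positivity
  set c1 : ℝ := (n:ℝ) * L * (Real.sqrt n + 2) with hc1
  have hc1nn : 0 ≤ c1 := by rw [hc1]; positivity
  set f : ℝ → ℝ := fun ε => Real.sqrt n * Real.sqrt (ε + (2*L + Real.sqrt ε) * (c1 * ε))
    + Real.sqrt n * (c1 * ε) + ε with hfdef
  set Ψ : ℝ → ℝ := fun ε => if ε < ε₀ then f ε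
    else Real.sqrt n * L + Real.sqrt n * Real.sqrt (L^2 + ε) + 1 with hΨ
  refine ⟨Ψ, ?_, ?_⟩
  · -- Tendsto
    have hf0 : f 0 = 0 := by simp [hfdef]
    have h1 : Continuous fun ε : ℝ => ε + (2*L + Real.sqrt ε) * (c1 * ε) :=
      continuous_id.add ((continuous_const.add Real.continuous_sqrt).mul
        (continuous_const.mul continuous_id))
    have hfc : Continuous f := by
      rw [hfdef]
      exact ((continuous_const.mul h1.sqrt).add
        (continuous_const.mul (continuous_const.mul continuous_id))).add continuous_id
    have htf : Tendsto f (𝓝[>] (0:ℝ)) (𝓝 0) := by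
      have h2 := hfc.tendsto 0
      rw [hf0] at h2
      exact h2.mono_left nhdsWithin_le_nhds
    have hev : f =ᶠ[𝓝[>] (0:ℝ)] Ψ := by
      have h3 : ∀ᶠ x in 𝓝 (0:ℝ), x < ε₀ := gt_mem_nhds hε₀pos
      have h4 := h3.filter_mono (nhdsWithin_le_nhds (s := Set.Ioi (0:ℝ)))
      exact h4.mono fun ε hlt => (if_pos hlt).symm
    exact Filter.Tendsto.congr' hev htf
  · intro ε hε T hT k e horth hsum
    set A : Matrix (Fin n) (Fin n) ℝ :=
      Matrix.of fun i j => T (EuclideanSpace.single i (1:ℝ))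
        (EuclideanSpace.single j (1:ℝ)) with hA
    set E : Matrix (Fin n) (Fin k) ℝ := Matrix.of fun a i => e i a with hE
    set E' : Matrix (Fin k) (Fin k) ℝ := Eᵀ * A * E with hE'
    have hAev : ∀ a b, T (EuclideanSpace.single a (1:ℝ)) (EuclideanSpace.single b (1:ℝ))
        = A a b := fun a b => rfl
    have hfsqA : bilinNormSq n T = fsq A := rfl
    have htrA : bilinTrace n T = trace A := rfl
    have hTe : ∀ i j, T (e i) (e j) = E' i j := by
      intro i j
      rw [bilin_apply]
      simp only [hAev]
      rw [hE', Matrix.mul_apply]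
      calc ∑ a, ∑ b, e i a * e j b * A a b
          = ∑ b, ∑ a, e i a * e j b * A a b := Finset.sum_comm
        _ = ∑ b, (Eᵀ * A) i b * E b j := by
            refine Finset.sum_congr rfl fun b _ => ?_
            rw [Matrix.mul_apply, Finset.sum_mul]
            refine Finset.sum_congr rfl fun a _ => ?_
            show e i a * e j b * A a b = Eᵀ i a * A a b * E b j
            rw [Matrix.transpose_apply]
            show e i a * e j b * A a b = E a i * A a b * e j b
            show e i a * e j b * A a b = e i a * A a b * e j b
            ring
    have hsumE' : (∑ i, ∑ j, (T (e i) (e j))^2) = fsq E' :=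
      Finset.sum_congr rfl fun i _ => Finset.sum_congr rfl fun j _ => by rw [hTe]
    have htrE' : (∑ i, T (e i) (e i)) = trace E' := by
      rw [Matrix.trace]
      exact Finset.sum_congr rfl fun i _ => hTe i i
    rw [hfsqA, hsumE'] at hsum
    rw [htrA, htrE']
    have hfsqA_le : fsq A ≤ L^2 := hfsqA ▸ hT
    have hfsqE'_le : fsq E' ≤ L^2 + ε := by
      have h := (abs_lt.mp hsum).1
      linarith
    by_cases hcase : ε < ε₀
    · -- small ε
      have hεn1 : ((n:ℝ) + 1) * ε < 1 := by
        rw [hε₀] at hcase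
        have hn1 : (0:ℝ) < (n:ℝ) + 1 := by positivity
        have h5 := mul_lt_mul_of_pos_left hcase hn1
        have h6 : ((n:ℝ)+1) * (1 / (2*((n:ℝ)+1))) = 1/2 := by field_simp
        rw [h6] at h5
        linarith
      have hkn : k ≤ n := card_le_of_eps_orth hε hεn1 e horth
      have hnε : (n:ℝ) * ε ≤ 1/2 := by
        rw [hε₀] at hcase
        have h1' : (n:ℝ) * ε ≤ (n:ℝ) * (1/(2*((n:ℝ)+1))) :=
          mul_le_mul_of_nonneg_left hcase.le (Nat.cast_nonneg n)
        have h2' : (n:ℝ) * (1/(2*((n:ℝ)+1))) ≤ 1/2 := by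
          rw [mul_one_div, div_le_div_iff₀ (by positivity) (by norm_num)]
          nlinarith [Nat.cast_nonneg (α := ℝ) n]
        linarith
      have hG1 : ∀ i j, |(Eᵀ * E) i j - (1 : Matrix (Fin k) (Fin k) ℝ) i j| < ε := by
        intro i j
        have h := horth i j
        have hinner : (Eᵀ * E) i j = (inner ℝ (e i) (e j) : ℝ) := by
          rw [Matrix.mul_apply, inner_euclidean]
          exact Finset.sum_congr rfl fun a _ => rfl
        rw [hinner, Matrix.one_apply]
        exact h
      have hfsqG : fsq (Eᵀ * E - 1) ≤ ((n:ℝ) * ε)^2 := by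
        have hb : fsq (Eᵀ * E - 1) ≤ (k:ℝ) * ((k:ℝ) * ε^2) := by
          calc fsq (Eᵀ * E - 1) ≤ ∑ _i : Fin k, ∑ _j : Fin k, ε^2 := by
                refine Finset.sum_le_sum fun i _ => Finset.sum_le_sum fun j _ => ?_
                have h := (hG1 i j).le
                rw [Matrix.sub_apply, ← sq_abs]
                exact pow_le_pow_left₀ (abs_nonneg _) h 2
            _ = (k:ℝ) * ((k:ℝ) * ε^2) := by
                simp [Finset.sum_const, Finset.card_univ, nsmul_eq_mul]
        have hk' : (k:ℝ) ≤ (n:ℝ) := Nat.cast_le.mpr hkn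
        calc fsq (Eᵀ * E - 1) ≤ (k:ℝ)*((k:ℝ)*ε^2) := hb
          _ ≤ (n:ℝ)*((n:ℝ)*ε^2) := by
              have hkk : (k:ℝ)*(k:ℝ) ≤ (n:ℝ)*(n:ℝ) :=
                mul_le_mul hk' hk' (Nat.cast_nonneg k) (Nat.cast_nonneg n)
              nlinarith [sq_nonneg ε, hkk]
          _ = ((n:ℝ)*ε)^2 := by ring
      have hsmall : fsq (Eᵀ * E - 1) ≤ 1/4 := by
        have hnn : (0:ℝ) ≤ (n:ℝ)*ε := by positivity
        nlinarith [hnε, hfsqG, hnn]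
      obtain ⟨Q, S, hQ, hEQS, hSt, hfsqS⟩ := sqrt_factor E hsmall
      have hnrmS1 : nrm (S - 1) ≤ (n:ℝ) * ε := by
        rw [nrm]
        calc Real.sqrt (fsq (S-1)) ≤ Real.sqrt (((n:ℝ)*ε)^2) :=
              Real.sqrt_le_sqrt (hfsqS.trans hfsqG)
          _ = (n:ℝ)*ε := Real.sqrt_sq (by positivity)
      set P := Q * Qᵀ with hP
      have hPt : Pᵀ = P := by rw [hP, Matrix.transpose_mul, Matrix.transpose_transpose]
      have hPP : P * P = P := by
        rw [hP]
        calc Q*Qᵀ*(Q*Qᵀ) = Q*((Qᵀ*Q)*Qᵀ) := by simp only [Matrix.mul_assoc]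
          _ = Q*Qᵀ := by rw [hQ, Matrix.one_mul]
      set B := Qᵀ * A * Q with hB
      have hPAP : P * A * P = Q * (B * Qᵀ) := by rw [hP, hB]; simp only [Matrix.mul_assoc]
      have hfsqPAP : fsq (P * A * P) = fsq B := by
        rw [hPAP, fsq_Qmul Q hQ, fsq_mulQt Q hQ]
      have htrPAP : trace (P * A * P) = trace B := by
        rw [hPAP, Matrix.trace_mul_comm, Matrix.mul_assoc, hQ, Matrix.mul_one]
      have hfsqB_le : fsq B ≤ fsq A := by
        have s1 := fsq_split_left P hPt hPP A
        have s2 := fsq_split_right P hPt hPP (P * A)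
        have n1 := fsq_nonneg ((1-P) * A)
        have n2 := fsq_nonneg ((P*A) * (1-P))
        rw [← hfsqPAP]
        linarith
      have hnrmB : nrm B ≤ L := by
        rw [nrm]
        calc Real.sqrt (fsq B) ≤ Real.sqrt (L^2) :=
              Real.sqrt_le_sqrt (hfsqB_le.trans hfsqA_le)
          _ = L := Real.sqrt_sq hL.le
      have hE'SBS : E' = S * B * S := by
        rw [hE', hEQS, hB, Matrix.transpose_mul, hSt]
        simp only [Matrix.mul_assoc]
      have hnrmS : nrm S ≤ Real.sqrt n + 1 := by
        have h := abs_nrm_sub_nrm_le S 1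
        rw [nrm_one] at h
        have hk' : Real.sqrt k ≤ Real.sqrt n := Real.sqrt_le_sqrt (Nat.cast_le.mpr hkn)
        have h2 := (abs_le.mp h).2
        linarith [hnrmS1, hnε]
      have hdiff : nrm (E' - B) ≤ c1 * ε := by
        have t1 : E' - (B * S) = (S - 1) * (B * S) := by rw [hE'SBS]; noncomm_ring
        have t2 : (B * S) - B = B * (S - 1) := by noncomm_ring
        have h := nrm_sub_le E' (B * S) B
        rw [t1, t2] at h
        have b1 : nrm ((S-1) * (B*S)) ≤ ((n:ℝ)*ε) * (L * (Real.sqrt n + 1)) := by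
          calc nrm ((S-1)*(B*S)) ≤ nrm (S-1) * nrm (B*S) := nrm_mul_le _ _
            _ ≤ nrm (S-1) * (nrm B * nrm S) :=
                mul_le_mul_of_nonneg_left (nrm_mul_le _ _) (nrm_nonneg _)
            _ ≤ ((n:ℝ)*ε) * (L * (Real.sqrt n + 1)) := by
                refine mul_le_mul hnrmS1 ?_ (mul_nonneg (nrm_nonneg _) (nrm_nonneg _))
                  (by positivity)
                exact mul_le_mul hnrmB hnrmS (nrm_nonneg _) hL.le
        have b2 : nrm (B * (S-1)) ≤ L * ((n:ℝ)*ε) := by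
          calc nrm (B*(S-1)) ≤ nrm B * nrm (S-1) := nrm_mul_le _ _
            _ ≤ L * ((n:ℝ)*ε) := mul_le_mul hnrmB hnrmS1 (nrm_nonneg _) hL.le
        calc nrm (E' - B) ≤ nrm ((S-1)*(B*S)) + nrm (B*(S-1)) := h
          _ ≤ ((n:ℝ)*ε)*(L*(Real.sqrt n+1)) + L*((n:ℝ)*ε) := add_le_add b1 b2
          _ = c1 * ε := by rw [hc1]; ring
      have hnrmE' : nrm E' ≤ L + Real.sqrt ε := by
        have hh : fsq E' ≤ (L + Real.sqrt ε)^2 := by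
          have hsq : Real.sqrt ε ^ 2 = ε := Real.sq_sqrt hε.le
          nlinarith [hfsqE'_le, Real.sqrt_nonneg ε, hL.le]
        rw [nrm]
        calc Real.sqrt (fsq E') ≤ Real.sqrt ((L+Real.sqrt ε)^2) := Real.sqrt_le_sqrt hh
          _ = L + Real.sqrt ε := Real.sqrt_sq (by positivity)
      have hfsqdiffB : fsq E' - fsq B ≤ (2*L + Real.sqrt ε) * (c1 * ε) := by
        have h1' : nrm E' - nrm B ≤ nrm (E' - B) :=
          le_trans (le_abs_self _) (abs_nrm_sub_nrm_le E' B)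
        have e1 : fsq E' - fsq B = (nrm E' + nrm B) * (nrm E' - nrm B) := by
          rw [← nrm_sq, ← nrm_sq]; ring
        rw [e1]
        calc (nrm E' + nrm B) * (nrm E' - nrm B) ≤ (nrm E' + nrm B) * (c1 * ε) :=
              mul_le_mul_of_nonneg_left (h1'.trans hdiff)
                (add_nonneg (nrm_nonneg _) (nrm_nonneg _))
          _ ≤ (2*L + Real.sqrt ε) * (c1*ε) := by
              refine mul_le_mul_of_nonneg_right ?_ (mul_nonneg hc1nn hε.le)
              linarith [hnrmE', hnrmB, Real.sqrt_nonneg ε]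
      have hd3 : fsq A - fsq B < ε + (2*L + Real.sqrt ε) * (c1 * ε) := by
        have h := (abs_lt.mp hsum).2
        linarith
      have hfsqP' : fsq ((1 - P) * A * (1 - P)) ≤ fsq A - fsq B := by
        have s1 := fsq_split_left P hPt hPP A
        have s3 := fsq_split_right P hPt hPP ((1-P) * A)
        have n1 := fsq_nonneg ((P*A)*(1-P))
        have n2 := fsq_nonneg (((1-P)*A)*P)
        have s2 := fsq_split_right P hPt hPP (P * A)
        linarith [hfsqPAP]
      have htrsplit := trace_split P hPP A
      have hb1 : |trace ((1-P) * A * (1-P))|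
          ≤ Real.sqrt n * Real.sqrt (ε + (2*L + Real.sqrt ε)*(c1*ε)) := by
        have h := abs_trace_le ((1-P)*A*(1-P))
        have hfs : fsq ((1-P)*A*(1-P)) ≤ ε + (2*L + Real.sqrt ε)*(c1*ε) :=
          le_of_lt (lt_of_le_of_lt hfsqP' hd3)
        have hnr : nrm ((1-P)*A*(1-P)) ≤ Real.sqrt (ε + (2*L + Real.sqrt ε)*(c1*ε)) := by
          rw [nrm]; exact Real.sqrt_le_sqrt hfs
        calc |trace ((1-P)*A*(1-P))| ≤ Real.sqrt n * nrm ((1-P)*A*(1-P)) := h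
          _ ≤ Real.sqrt n * Real.sqrt (ε + (2*L + Real.sqrt ε)*(c1*ε)) :=
              mul_le_mul_of_nonneg_left hnr (Real.sqrt_nonneg _)
      have hb2 : |trace B - trace E'| ≤ Real.sqrt n * (c1 * ε) := by
        rw [← Matrix.trace_sub]
        have h := abs_trace_le (B - E')
        have hnr : nrm (B - E') ≤ c1 * ε := by rw [nrm_sub_comm]; exact hdiff
        calc |trace (B - E')| ≤ Real.sqrt k * nrm (B-E') := h
          _ ≤ Real.sqrt n * (c1*ε) :=
              mul_le_mul (Real.sqrt_le_sqrt (Nat.cast_le.mpr hkn)) hnr (nrm_nonneg _)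
                (Real.sqrt_nonneg _)
      have hsplit2 : trace A - trace E' = trace ((1-P)*A*(1-P)) + (trace B - trace E') := by
        rw [htrsplit, htrPAP]; ring
      rw [hΨ]
      simp only [if_pos hcase]
      rw [hsplit2, hfdef]
      calc |trace ((1-P)*A*(1-P)) + (trace B - trace E')|
          ≤ |trace ((1-P)*A*(1-P))| + |trace B - trace E'| := abs_add_le _ _
        _ ≤ Real.sqrt n * Real.sqrt (ε + (2*L + Real.sqrt ε)*(c1*ε))
            + Real.sqrt n * (c1 * ε) := add_le_add hb1 hb2
        _ < Real.sqrt n * Real.sqrt (ε + (2*L + Real.sqrt ε) * (c1 * ε))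
            + Real.sqrt n * (c1 * ε) + ε := by linarith
    · -- large ε
      rw [hΨ]
      simp only [if_neg hcase]
      have h1 : |trace A| ≤ Real.sqrt n * L := by
        have h := abs_trace_le A
        have hnr : nrm A ≤ L := by
          rw [nrm]
          calc Real.sqrt (fsq A) ≤ Real.sqrt (L^2) := Real.sqrt_le_sqrt hfsqA_le
            _ = L := Real.sqrt_sq hL.le
        calc |trace A| ≤ Real.sqrt n * nrm A := h
          _ ≤ Real.sqrt n * L := mul_le_mul_of_nonneg_left hnr (Real.sqrt_nonneg _)
      have h2 : |trace E'| ≤ Real.sqrt n * Real.sqrt (L^2 + ε) := by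
        have h := trace_sq_le A E
        have hsq : (trace E')^2 ≤ (n:ℝ) * (L^2 + ε) := by
          rw [hE']
          exact h.trans (mul_le_mul_of_nonneg_left (hE' ▸ hfsqE'_le) (by positivity))
        calc |trace E'| = Real.sqrt ((trace E')^2) := (Real.sqrt_sq_eq_abs _).symm
          _ ≤ Real.sqrt ((n:ℝ)*(L^2+ε)) := Real.sqrt_le_sqrt hsq
          _ = Real.sqrt n * Real.sqrt (L^2+ε) := Real.sqrt_mul (by positivity) _
      calc |trace A - trace E'| ≤ |trace A| + |trace E'| := abs_sub _ _
        _ ≤ Real.sqrt n * L + Real.sqrt n * Real.sqrt (L^2+ε) := add_le_add h1 h2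
        _ < Real.sqrt n * L + Real.sqrt n * Real.sqrt (L^2+ε) + 1 := by linarith
end

section
/- Let V be a finite-dimensional real Hilbert space and 1 < p < 2 with conjugate exponent q = p/(p−1). Then for all u, v ∈ V, |u+v|^q + |u−v|^q ≤ 2(|u|^p + |v|^p)^{q−1}. -/
set_option maxHeartbeats 1000000

open Complex Set

lemma clarkson_pairing {p q : ℝ} (hp1 : 1 < p) (hp2 : p < 2) (hq : q = p / (p - 1))
    {a b x y : ℝ} (ha : 0 < a) (hb : 0 < b) (hx : 0 < x) (hy : 0 < y)
    (hab : a ^ p + b ^ p ≤ 1) (hxy : x ^ p + y ^ p ≤ 1) :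
    (a + b) * x + (a - b) * y ≤ 2 ^ (1 / q : ℝ) := by
  have hp0 : (0:ℝ) < p := by linarith
  have hpm : (0:ℝ) < p - 1 := by linarith
  have hq0 : (0:ℝ) < q := by rw [hq]; positivity
  have hq2 : (2:ℝ) < q := by
    rw [hq, lt_div_iff₀ hpm]; nlinarith
  have hqinv : 1 - 1 / q = 1 / p := by
    rw [hq]; field_simp; ring
  -- the analytic family
  set g : ℝ → ℂ → ℂ := fun c z => Complex.exp (((p : ℂ) * (1 - z / 2)) * (Real.log c : ℂ)) with hg
  set F : ℂ → ℂ := fun z =>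
    (g a z + g b z) * g x z + (g a z - g b z) * g y z with hF
  -- norm of g
  have norm_g : ∀ c : ℝ, 0 < c → ∀ z : ℂ, ‖g c z‖ = c ^ (p * (1 - z.re / 2)) := by
    intro c hc z
    rw [hg]
    simp only
    rw [Complex.norm_exp]
    rw [Real.rpow_def_of_pos hc]
    congr 1
    simp [Complex.mul_re, Complex.sub_re, Complex.div_re, Complex.ofReal_re, Complex.ofReal_im,
      Complex.one_re, Complex.one_im, Complex.sub_im, Complex.div_im]
    ring
  -- all the bases are at most 1
  have le_one : ∀ c : ℝ, 0 < c → c ^ p ≤ 1 → c ≤ 1 := by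
    intro c hc hcp
    by_contra hlt
    push_neg at hlt
    have : (1:ℝ) < c ^ p := Real.one_lt_rpow_iff_of_pos hc |>.2 (Or.inl ⟨hlt, hp0⟩)
    linarith
  have hap : a ^ p ≤ 1 := by nlinarith [Real.rpow_pos_of_pos hb p]
  have hbp : b ^ p ≤ 1 := by nlinarith [Real.rpow_pos_of_pos ha p]
  have hxp : x ^ p ≤ 1 := by nlinarith [Real.rpow_pos_of_pos hy p]
  have hyp : y ^ p ≤ 1 := by nlinarith [Real.rpow_pos_of_pos hx p]
  have ha1 : a ≤ 1 := le_one a ha hap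
  have hb1 : b ≤ 1 := le_one b hb hbp
  have hx1 : x ≤ 1 := le_one x hx hxp
  have hy1 : y ≤ 1 := le_one y hy hyp
  -- differentiability
  have hdiffg : ∀ c : ℝ, Differentiable ℂ (g c) := by
    intro c
    rw [hg]
    apply Differentiable.cexp
    apply Differentiable.mul _ (differentiable_const _)
    apply Differentiable.mul (differentiable_const _)
    exact (differentiable_const _).sub (differentiable_id.div_const 2)
  have hdiffF : Differentiable ℂ F := by
    rw [hF]
    exact (((hdiffg a).add (hdiffg b)).mul (hdiffg x)).add
      (((hdiffg a).sub (hdiffg b)).mul (hdiffg y))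
  -- bound for g on the closed strip
  have hg_le_one : ∀ c : ℝ, 0 < c → c ≤ 1 → ∀ z : ℂ, 0 ≤ z.re → z.re ≤ 1 →
      ‖g c z‖ ≤ 1 := by
    intro c hc hc1 z h0 h1
    rw [norm_g c hc z]
    apply Real.rpow_le_one hc.le hc1
    nlinarith
  -- boundedness on closed strip
  have hBdd : BddAbove ((norm ∘ F) '' (Complex.HadamardThreeLines.verticalClosedStrip 0 1)) := by
    refine ⟨4, ?_⟩
    rintro w ⟨z, hz, rfl⟩
    simp only [Function.comp_apply]
    have h0 : 0 ≤ z.re := hz.1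
    have h1 : z.re ≤ 1 := hz.2
    have gb := fun c hc hc1 => hg_le_one c hc hc1 z h0 h1
    have ga' := gb a ha ha1
    have gb' := gb b hb hb1
    have gx' := gb x hx hx1
    have gy' := gb y hy hy1
    rw [hF]
    simp only
    calc ‖(g a z + g b z) * g x z + (g a z - g b z) * g y z‖
        ≤ ‖(g a z + g b z) * g x z‖ + ‖(g a z - g b z) * g y z‖ := norm_add_le _ _
      _ = ‖g a z + g b z‖ * ‖g x z‖ + ‖g a z - g b z‖ * ‖g y z‖ := by rw [norm_mul, norm_mul]
      _ ≤ (‖g a z‖ + ‖g b z‖) * ‖g x z‖ + (‖g a z‖ + ‖g b z‖) * ‖g y z‖ := by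
          gcongr
          · exact norm_add_le _ _
          · exact norm_sub_le _ _
      _ ≤ (1 + 1) * 1 + (1 + 1) * 1 := by
          gcongr <;> positivity
      _ = 4 := by norm_num
  -- edge at re = 0
  have hedge0 : ∀ z : ℂ, z ∈ Complex.re ⁻¹' {0} → ‖F z‖ ≤ 1 := by
    intro z hz
    have hz0 : z.re = 0 := hz
    have hng : ∀ c : ℝ, 0 < c → ‖g c z‖ = c ^ p := by
      intro c hc
      rw [norm_g c hc z, hz0]
      norm_num
    rw [hF]
    simp only
    calc ‖(g a z + g b z) * g x z + (g a z - g b z) * g y z‖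
        ≤ ‖g a z + g b z‖ * ‖g x z‖ + ‖g a z - g b z‖ * ‖g y z‖ := by
          refine (norm_add_le _ _).trans ?_
          rw [norm_mul, norm_mul]
      _ ≤ (a ^ p + b ^ p) * x ^ p + (a ^ p + b ^ p) * y ^ p := by
          have h1 : ‖g a z + g b z‖ ≤ a ^ p + b ^ p := by
            refine (norm_add_le _ _).trans ?_
            rw [hng a ha, hng b hb]
          have h2 : ‖g a z - g b z‖ ≤ a ^ p + b ^ p := by
            refine (norm_sub_le _ _).trans ?_
            rw [hng a ha, hng b hb]
          rw [hng x hx, hng y hy]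
          have k1 := mul_le_mul_of_nonneg_right h1 (Real.rpow_nonneg hx.le p)
          have k2 := mul_le_mul_of_nonneg_right h2 (Real.rpow_nonneg hy.le p)
          linarith
      _ ≤ 1 * x ^ p + 1 * y ^ p := by
          have k1 := mul_le_mul_of_nonneg_right hab (Real.rpow_nonneg hx.le p)
          have k2 := mul_le_mul_of_nonneg_right hab (Real.rpow_nonneg hy.le p)
          linarith
      _ ≤ 1 := by rw [one_mul, one_mul]; exact hxy
  -- parallelogram law in ℂ
  have par : ∀ w₁ w₂ : ℂ, ‖w₁ + w₂‖ ^ 2 + ‖w₁ - w₂‖ ^ 2 = 2 * (‖w₁‖ ^ 2 + ‖w₂‖ ^ 2) := by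
    intro w₁ w₂
    have nsq : ∀ w : ℂ, ‖w‖ ^ 2 = w.re ^ 2 + w.im ^ 2 := by
      intro w
      rw [Complex.sq_norm, Complex.normSq_apply]
      ring
    simp only [nsq, Complex.add_re, Complex.add_im, Complex.sub_re, Complex.sub_im]
    ring
  -- edge at re = 1
  have hedge1 : ∀ z : ℂ, z ∈ Complex.re ⁻¹' {1} → ‖F z‖ ≤ Real.sqrt 2 := by
    intro z hz
    have hz1 : z.re = 1 := hz
    have hng : ∀ c : ℝ, 0 < c → ‖g c z‖ = c ^ (p / 2) := by
      intro c hc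
      rw [norm_g c hc z, hz1]
      congr 1
      ring
    have hsq : ∀ c : ℝ, 0 < c → (c ^ (p / 2)) ^ 2 = c ^ p := by
      intro c hc
      rw [← Real.rpow_natCast (c ^ (p/2)) 2, ← Real.rpow_mul hc.le]
      norm_num
    set α := ‖g a z + g b z‖ with hα
    set β := ‖g a z - g b z‖ with hβ
    have hα0 : 0 ≤ α := norm_nonneg _
    have hβ0 : 0 ≤ β := norm_nonneg _
    have hX0 : (0:ℝ) ≤ x ^ (p/2) := Real.rpow_nonneg hx.le _
    have hY0 : (0:ℝ) ≤ y ^ (p/2) := Real.rpow_nonneg hy.le _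
    have hpar : α ^ 2 + β ^ 2 ≤ 2 := by
      have := par (g a z) (g b z)
      rw [hng a ha, hng b hb, hsq a ha, hsq b hb] at this
      rw [hα, hβ, this]
      linarith
    have hXY : (x ^ (p/2)) ^ 2 + (y ^ (p/2)) ^ 2 ≤ 1 := by
      rw [hsq x hx, hsq y hy]; exact hxy
    have hmain : α * x ^ (p/2) + β * y ^ (p/2) ≤ Real.sqrt 2 := by
      have hnn : 0 ≤ α * x ^ (p/2) + β * y ^ (p/2) :=
        add_nonneg (mul_nonneg hα0 hX0) (mul_nonneg hβ0 hY0)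
      have h2 : (α * x ^ (p/2) + β * y ^ (p/2)) ^ 2 ≤ 2 := by
        have e1 : 2*(α*x^(p/2))*(β*y^(p/2)) ≤ α^2*(y^(p/2))^2 + β^2*(x^(p/2))^2 := by
          nlinarith [sq_nonneg (α * y^(p/2) - β * x^(p/2))]
        have e2 : (α^2+β^2)*((x^(p/2))^2+(y^(p/2))^2) ≤ 2*1 :=
          mul_le_mul hpar hXY (add_nonneg (sq_nonneg _) (sq_nonneg _)) (by norm_num)
        nlinarith [e1, e2]
      calc α * x ^ (p/2) + β * y ^ (p/2)
          = Real.sqrt ((α * x ^ (p/2) + β * y ^ (p/2)) ^ 2) := (Real.sqrt_sq hnn).symm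
        _ ≤ Real.sqrt 2 := Real.sqrt_le_sqrt h2
    rw [hF]
    simp only
    calc ‖(g a z + g b z) * g x z + (g a z - g b z) * g y z‖
        ≤ α * ‖g x z‖ + β * ‖g y z‖ := by
          refine (norm_add_le _ _).trans ?_
          rw [norm_mul, norm_mul]
      _ = α * x ^ (p/2) + β * y ^ (p/2) := by rw [hng x hx, hng y hy]
      _ ≤ Real.sqrt 2 := hmain
  -- apply the three lines theorem at the point 2/q
  set z₀ : ℂ := ((2 / q : ℝ) : ℂ) with hz₀
  have hz₀re : z₀.re = 2 / q := Complex.ofReal_re _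
  have hz₀mem : z₀ ∈ Complex.HadamardThreeLines.verticalClosedStrip 0 1 := by
    constructor
    · rw [hz₀re]; positivity
    · rw [hz₀re, div_le_one hq0]; linarith
  have h3l := Complex.HadamardThreeLines.norm_le_interp_of_mem_verticalClosedStrip₀₁' F
    (a := 1) (b := Real.sqrt 2) hz₀mem hdiffF.diffContOnCl hBdd hedge0 hedge1
  -- compute the bound
  have hbound : (1:ℝ) ^ (1 - z₀.re) * Real.sqrt 2 ^ z₀.re = 2 ^ (1 / q : ℝ) := by
    rw [Real.one_rpow, one_mul, hz₀re, Real.sqrt_eq_rpow,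
      ← Real.rpow_mul (by norm_num : (0:ℝ) ≤ 2)]
    congr 1
    field_simp
  -- compute F at z₀
  have hexp1 : ((p : ℂ) * (1 - z₀ / 2)) = 1 := by
    have hre : p * (1 - (2/q)/2) = 1 := by
      have h' : p * (q - 1) = q := by
        rw [hq]
        field_simp
        ring
      field_simp
      nlinarith [h']
    rw [hz₀]
    have : ((p : ℂ) * (1 - ((2 / q : ℝ) : ℂ) / 2)) = ((p * (1 - (2/q)/2) : ℝ) : ℂ) := by
      push_cast
      ring
    rw [this, hre]
    norm_num
  have hgz₀ : ∀ c : ℝ, 0 < c → g c z₀ = (c : ℂ) := by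
    intro c hc
    rw [hg]
    simp only
    rw [hexp1, one_mul, ← Complex.ofReal_exp, Real.exp_log hc]
  have hFz₀ : F z₀ = (((a + b) * x + (a - b) * y : ℝ) : ℂ) := by
    rw [hF]
    simp only
    rw [hgz₀ a ha, hgz₀ b hb, hgz₀ x hx, hgz₀ y hy]
    push_cast
    ring
  rw [hFz₀, hbound] at h3l
  rw [Complex.norm_real] at h3l
  exact (le_abs_self _).trans h3l

lemma clarkson_scalar {p q : ℝ} (hp1 : 1 < p) (hp2 : p < 2) (hq : q = p / (p - 1))
    {s t : ℝ} (ht : 0 ≤ t) (hts : t ≤ s) :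
    (s + t) ^ q + (s - t) ^ q ≤ 2 * (s ^ p + t ^ p) ^ (q - 1) := by
  have hp0 : (0:ℝ) < p := by linarith
  have hpm : (0:ℝ) < p - 1 := by linarith
  have hq0 : (0:ℝ) < q := by rw [hq]; positivity
  have hq2 : (2:ℝ) < q := by rw [hq, lt_div_iff₀ hpm]; nlinarith
  have hpq : p * (q - 1) = q := by rw [hq]; field_simp; ring
  have hs0 : 0 ≤ s := ht.trans hts
  rcases eq_or_lt_of_le hs0 with hs | hs
  · -- s = 0, hence t = 0
    have ht0 : t = 0 := le_antisymm (by linarith) ht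
    rw [← hs, ht0]
    norm_num [Real.zero_rpow (ne_of_gt hq0), Real.zero_rpow (ne_of_gt hp0)]
    positivity
  rcases eq_or_lt_of_le ht with ht0 | ht0
  · -- t = 0 : equality
    rw [← ht0, add_zero, sub_zero, Real.zero_rpow (ne_of_gt hp0), add_zero,
      ← Real.rpow_mul hs.le p (q - 1), hpq]
    linarith
  rcases eq_or_lt_of_le hts with hst | hst
  · -- t = s : equality
    subst hst
    have h1 : t + t = 2 * t := by ring
    have h2 : t ^ p + t ^ p = 2 * t ^ p := by ring
    rw [h1, sub_self, Real.zero_rpow (ne_of_gt hq0), add_zero, h2]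
    rw [Real.mul_rpow (by norm_num) ht0.le, Real.mul_rpow (by norm_num)
      (Real.rpow_nonneg ht0.le p), ← Real.rpow_mul ht0.le p (q - 1), hpq]
    have h3 : (2:ℝ) ^ q = 2 * 2 ^ (q - 1) := by
      rw [show q = 1 + (q - 1) by ring, Real.rpow_add (by norm_num) 1 (q - 1), Real.rpow_one]
      ring_nf
    rw [h3]
    apply le_of_eq
    ring
  -- main case 0 < t < s
  have hsp : (0:ℝ) < s ^ p := Real.rpow_pos_of_pos hs p
  have htp : (0:ℝ) < t ^ p := Real.rpow_pos_of_pos ht0 p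
  set N : ℝ := (s ^ p + t ^ p) ^ (1 / p : ℝ) with hN
  have hN0 : 0 < N := Real.rpow_pos_of_pos (by linarith) _
  have hNp : N ^ p = s ^ p + t ^ p := by
    rw [hN, ← Real.rpow_mul (by positivity), one_div_mul_cancel (ne_of_gt hp0), Real.rpow_one]
  set a : ℝ := s / N with ha'
  set b : ℝ := t / N with hb'
  have ha : 0 < a := div_pos hs hN0
  have hb : 0 < b := div_pos ht0 hN0
  have hba : b < a := by
    rw [ha', hb', div_lt_div_iff₀ hN0 hN0]
    nlinarith
  have hab1 : a ^ p + b ^ p = 1 := by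
    rw [ha', hb', Real.div_rpow hs0 hN0.le, Real.div_rpow ht hN0.le, ← add_div, hNp,
      div_self (by positivity)]
  set A : ℝ := a + b with hA'
  set B : ℝ := a - b with hB'
  have hA : 0 < A := by rw [hA']; linarith
  have hB : 0 < B := by rw [hB']; linarith
  have hSAB : 0 < A ^ q + B ^ q := by positivity
  set M : ℝ := (A ^ q + B ^ q) ^ (1 / p : ℝ) with hM'
  have hM : 0 < M := Real.rpow_pos_of_pos hSAB _
  have hMp : M ^ p = A ^ q + B ^ q := by
    rw [hM', ← Real.rpow_mul hSAB.le, one_div_mul_cancel (ne_of_gt hp0), Real.rpow_one]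
  set x : ℝ := A ^ (q - 1) / M with hx'
  set y : ℝ := B ^ (q - 1) / M with hy'
  have hx : 0 < x := div_pos (Real.rpow_pos_of_pos hA _) hM
  have hy : 0 < y := div_pos (Real.rpow_pos_of_pos hB _) hM
  have hrq : ∀ c : ℝ, 0 < c → (c ^ (q - 1)) ^ p = c ^ q := by
    intro c hc
    rw [← Real.rpow_mul hc.le, mul_comm, hpq]
  have hxy1 : x ^ p + y ^ p = 1 := by
    rw [hx', hy', Real.div_rpow (Real.rpow_nonneg hA.le _) hM.le,
      Real.div_rpow (Real.rpow_nonneg hB.le _) hM.le, ← add_div, hMp,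
      hrq A hA, hrq B hB, div_self (ne_of_gt hSAB)]
  have hpair := clarkson_pairing hp1 hp2 hq ha hb hx hy (le_of_eq hab1) (le_of_eq hxy1)
  -- compute the pairing
  have hcomp : (a + b) * x + (a - b) * y = (A ^ q + B ^ q) ^ (1 / q : ℝ) := by
    have hAq : A * A ^ (q - 1) = A ^ q := by
      rw [show q = 1 + (q - 1) by ring, Real.rpow_add hA, Real.rpow_one]
      ring_nf
    have hBq : B * B ^ (q - 1) = B ^ q := by
      rw [show q = 1 + (q - 1) by ring, Real.rpow_add hB, Real.rpow_one]
      ring_nf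
    rw [hx', hy', ← hA', ← hB']
    rw [mul_div_assoc', mul_div_assoc', hAq, hBq, ← add_div]
    have hq' : (1:ℝ) - 1/p = 1/q := by
      rw [hq]
      field_simp
    rw [hM', ← hq', Real.rpow_sub hSAB, Real.rpow_one]
  rw [hcomp] at hpair
  have hAB2 : A ^ q + B ^ q ≤ 2 := by
    have h1 := Real.rpow_le_rpow (Real.rpow_nonneg hSAB.le _) hpair hq0.le
    rwa [← Real.rpow_mul hSAB.le, ← Real.rpow_mul (by norm_num : (0:ℝ) ≤ 2),
      one_div_mul_cancel (ne_of_gt hq0), Real.rpow_one, Real.rpow_one] at h1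
  -- unnormalize
  have hsA : s + t = N * A := by
    rw [hA', ha', hb']
    field_simp
  have hsB : s - t = N * B := by
    rw [hB', ha', hb']
    field_simp
  have hfin : (s + t) ^ q + (s - t) ^ q = N ^ q * (A ^ q + B ^ q) := by
    rw [hsA, hsB, Real.mul_rpow hN0.le hA.le, Real.mul_rpow hN0.le hB.le]
    ring
  have hNq : N ^ q = (s ^ p + t ^ p) ^ (q - 1) := by
    have h' : (1/p) * q = q - 1 := by
      field_simp
      linarith [hpq]
    rw [hN, ← Real.rpow_mul (by positivity), h']
  calc (s + t) ^ q + (s - t) ^ q = N ^ q * (A ^ q + B ^ q) := hfin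
    _ ≤ N ^ q * 2 := mul_le_mul_of_nonneg_left hAB2 (Real.rpow_nonneg hN0.le q)
    _ = 2 * (s ^ p + t ^ p) ^ (q - 1) := by rw [hNq]; ring

open RealInnerProductSpace in
lemma clarkson_aux {V : Type*} [NormedAddCommGroup V] [InnerProductSpace ℝ V]
    (p q : ℝ) (hp1 : 1 < p) (hp2 : p < 2) (hq : q = p / (p - 1)) (u v : V)
    (hBA : ‖u - v‖ ≤ ‖u + v‖) :
    ‖u + v‖ ^ q + ‖u - v‖ ^ q ≤ 2 * (‖u‖ ^ p + ‖v‖ ^ p) ^ (q - 1) := by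
  have hp0 : (0:ℝ) < p := by linarith
  have hpm : (0:ℝ) < p - 1 := by linarith
  have hq0 : (0:ℝ) < q := by rw [hq]; positivity
  have hq2 : (2:ℝ) < q := by rw [hq, lt_div_iff₀ hpm]; nlinarith
  set xn : ℝ := ‖u‖ with hxn
  set yn : ℝ := ‖v‖ with hyn
  set A : ℝ := ‖u + v‖ with hA
  set B : ℝ := ‖u - v‖ with hB
  have hxn0 : 0 ≤ xn := norm_nonneg u
  have hyn0 : 0 ≤ yn := norm_nonneg v
  have hA0 : 0 ≤ A := norm_nonneg _
  have hB0 : 0 ≤ B := norm_nonneg _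
  have hpar : A ^ 2 + B ^ 2 = 2 * (xn ^ 2 + yn ^ 2) := by
    nlinarith [parallelogram_law_with_norm ℝ u v]
  have hinner : ⟪u + v, u - v⟫ = xn ^ 2 - yn ^ 2 := by
    rw [inner_sub_right, inner_add_left, inner_add_left, real_inner_self_eq_norm_sq,
      real_inner_self_eq_norm_sq, real_inner_comm v u]
    ring
  have hcs : |xn ^ 2 - yn ^ 2| ≤ A * B := by
    rw [← hinner]
    exact abs_real_inner_le_norm (u + v) (u - v)
  set X : ℝ := (A + B) / 2 with hX
  set Y : ℝ := (A - B) / 2 with hY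
  have hY0 : 0 ≤ Y := by rw [hY]; linarith
  have hYX : Y ≤ X := by rw [hX, hY]; linarith
  have hX0 : 0 ≤ X := hY0.trans hYX
  have hsum : xn ^ 2 + yn ^ 2 = X ^ 2 + Y ^ 2 := by
    rw [hX, hY]; nlinarith [hpar]
  have hprod : X ^ 2 - Y ^ 2 = A * B := by rw [hX, hY]; ring
  obtain ⟨hcs1, hcs2⟩ := abs_le.mp hcs
  have hx2le : xn ^ 2 ≤ X ^ 2 := by nlinarith
  have hx2ge : Y ^ 2 ≤ xn ^ 2 := by nlinarith
  have hY2X2 : Y ^ 2 ≤ X ^ 2 := by nlinarith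
  -- concavity argument
  have hφ : ConcaveOn ℝ (Set.Ici (0:ℝ)) (fun s : ℝ => s ^ (p/2 : ℝ)) :=
    Real.concaveOn_rpow (by linarith) (by linarith)
  have hsub : Set.Icc (Y ^ 2) (X ^ 2) ⊆ Set.Ici (0:ℝ) := fun z hz =>
    le_trans (sq_nonneg Y) hz.1
  have c1 : ConcaveOn ℝ (Set.Icc (Y ^ 2) (X ^ 2)) (fun s : ℝ => s ^ (p/2 : ℝ)) :=
    hφ.subset hsub (convex_Icc _ _)
  have c2 : ConcaveOn ℝ (Set.Icc (Y ^ 2) (X ^ 2))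
      (fun s : ℝ => (X ^ 2 + Y ^ 2 - s) ^ (p/2 : ℝ)) := by
    refine ⟨convex_Icc _ _, ?_⟩
    intro w hw z hz α β hα hβ hαβ
    have h1 : X ^ 2 + Y ^ 2 - w ∈ Set.Ici (0:ℝ) := by
      simp only [Set.mem_Ici]
      nlinarith [hw.2, sq_nonneg Y]
    have h2 : X ^ 2 + Y ^ 2 - z ∈ Set.Ici (0:ℝ) := by
      simp only [Set.mem_Ici]
      nlinarith [hz.2, sq_nonneg Y]
    have key : α • (X ^ 2 + Y ^ 2 - w) + β • (X ^ 2 + Y ^ 2 - z)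
        = X ^ 2 + Y ^ 2 - (α • w + β • z) := by
      simp only [smul_eq_mul]
      linear_combination (X ^ 2 + Y ^ 2) * hαβ
    have := hφ.2 h1 h2 hα hβ hαβ
    rw [key] at this
    exact this
  have hcon := c1.add c2
  have hseg : xn ^ 2 ∈ segment ℝ (Y ^ 2) (X ^ 2) := by
    rw [segment_eq_Icc hY2X2]
    exact ⟨hx2ge, hx2le⟩
  have hmin := hcon.ge_on_segment ⟨le_refl _, hY2X2⟩ ⟨hY2X2, le_refl _⟩ hseg
  have hsqr : ∀ z : ℝ, 0 ≤ z → ((z ^ 2 : ℝ)) ^ (p/2 : ℝ) = z ^ p := by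
    intro z hz
    rw [← Real.rpow_natCast z 2, ← Real.rpow_mul hz]
    congr 1
    push_cast
    ring
  have hfY : (Y ^ 2) ^ (p/2 : ℝ) + (X ^ 2 + Y ^ 2 - Y ^ 2) ^ (p/2 : ℝ) = X ^ p + Y ^ p := by
    rw [show X ^ 2 + Y ^ 2 - Y ^ 2 = X ^ 2 by ring, hsqr X hX0, hsqr Y hY0]
    ring
  have hfX : (X ^ 2) ^ (p/2 : ℝ) + (X ^ 2 + Y ^ 2 - X ^ 2) ^ (p/2 : ℝ) = X ^ p + Y ^ p := by
    rw [show X ^ 2 + Y ^ 2 - X ^ 2 = Y ^ 2 by ring, hsqr X hX0, hsqr Y hY0]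
  have hfx : (xn ^ 2) ^ (p/2 : ℝ) + (X ^ 2 + Y ^ 2 - xn ^ 2) ^ (p/2 : ℝ) = xn ^ p + yn ^ p := by
    rw [show X ^ 2 + Y ^ 2 - xn ^ 2 = yn ^ 2 by linarith [hsum], hsqr xn hxn0, hsqr yn hyn0]
  have claim1 : X ^ p + Y ^ p ≤ xn ^ p + yn ^ p := by
    simp only [Pi.add_apply] at hmin
    rw [hfY, hfX, min_self, hfx] at hmin
    exact hmin
  -- scalar Clarkson
  have hscalar := clarkson_scalar hp1 hp2 hq hY0 hYX
  have hXYA : X + Y = A := by rw [hX, hY]; ring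
  have hXYB : X - Y = B := by rw [hX, hY]; ring
  rw [hXYA, hXYB] at hscalar
  calc A ^ q + B ^ q ≤ 2 * (X ^ p + Y ^ p) ^ (q - 1) := hscalar
    _ ≤ 2 * (xn ^ p + yn ^ p) ^ (q - 1) := by
        have h0 : 0 ≤ X ^ p + Y ^ p := by positivity
        have := Real.rpow_le_rpow h0 claim1 (by linarith : (0:ℝ) ≤ q - 1)
        linarith

theorem stmt2 {V : Type*} [NormedAddCommGroup V] [InnerProductSpace ℝ V]
    [FiniteDimensional ℝ V] (p q : ℝ) (hp1 : 1 < p) (hp2 : p < 2)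
    (hq : q = p / (p - 1)) (u v : V) :
    ‖u + v‖ ^ q + ‖u - v‖ ^ q ≤ 2 * (‖u‖ ^ p + ‖v‖ ^ p) ^ (q - 1) := by
  rcases le_total ‖u - v‖ ‖u + v‖ with h | h
  · exact clarkson_aux p q hp1 hp2 hq u v h
  · have h' : ‖u - -v‖ ≤ ‖u + -v‖ := by
      rw [sub_neg_eq_add, ← sub_eq_add_neg]
      exact h
    have := clarkson_aux p q hp1 hp2 hq u (-v) h'
    rw [sub_neg_eq_add, ← sub_eq_add_neg, norm_neg] at this
    linarith
end

section
/- Let (X, μ) be a finite measure space, V a finite-dimensional Hilbert space, 1 < p < ∞, and Tᵢ → T in L^p(X; V). Then Tᵢ^{(p−1)} → T^{(p−1)} in L^q(X; V), where q is the conjugate exponent and v^{(p−1)} := |v|^{p−2}v (with 0^{(p−1)} = 0). -/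
open MeasureTheory Filter Topology
open scoped ENNReal NNReal

section Aux
variable {V : Type*} [NormedAddCommGroup V] [InnerProductSpace ℝ V]

lemma norm_phi (p : ℝ) (hp : 1 < p) (v : V) :
    ‖(‖v‖ ^ (p - 2)) • v‖ = ‖v‖ ^ (p - 1) := by
  rcases eq_or_ne v 0 with rfl | hv
  · simp [Real.zero_rpow (by linarith : p - 1 ≠ 0)]
  · have h0 : (0:ℝ) < ‖v‖ := norm_pos_iff.mpr hv
    rw [norm_smul, Real.norm_rpow_of_nonneg (norm_nonneg v), Real.norm_of_nonneg (norm_nonneg v)]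
    rw [show p - 1 = (p - 2) + 1 by ring, Real.rpow_add h0, Real.rpow_one]

lemma phi_cont (p : ℝ) (hp : 1 < p) :
    Continuous (fun v : V => (‖v‖ ^ (p - 2)) • v) := by
  rw [continuous_iff_continuousAt]
  intro v₀
  rcases eq_or_ne v₀ 0 with rfl | hv
  · have h0 : ((‖(0:V)‖ ^ (p - 2)) • (0:V)) = 0 := by simp
    rw [ContinuousAt, h0]
    apply squeeze_zero_norm (fun v => (norm_phi p hp v).le)
    have : ContinuousAt (fun x : ℝ => x ^ (p - 1)) 0 :=
      Real.continuousAt_rpow_const 0 (p - 1) (Or.inr (by linarith))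
    have h2 := this.tendsto.comp (by simpa using continuous_norm.tendsto (0:V))
    simpa [Function.comp_def, Real.zero_rpow (by linarith : p - 1 ≠ 0)] using h2
  · have h0 : (0:ℝ) < ‖v₀‖ := norm_pos_iff.mpr hv
    exact ((continuous_norm.continuousAt.rpow_const (Or.inl h0.ne')).smul continuousAt_id)


lemma eLpNorm_phi {X : Type*} [MeasurableSpace X] (μ : Measure X) (p q : ℝ) (hp : 1 < p)
    (hq : q = p / (p - 1)) (f : X → V) :
    eLpNorm (fun x => (‖f x‖ ^ (p - 2)) • f x) (ENNReal.ofReal q) μ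
      = (eLpNorm f (ENNReal.ofReal p) μ) ^ (p / q) := by
  have hp0 : (0:ℝ) < p := by linarith
  have hq1 : 1 < q := by
    rw [hq, lt_div_iff₀ (by linarith)]; linarith
  have hq0 : (0:ℝ) < q := by linarith
  have hpq : (p - 1) * q = p := by
    rw [hq]; exact mul_div_cancel₀ p (by linarith)
  rw [eLpNorm_eq_lintegral_rpow_enorm_toReal (by simp [hq0]) (by simp),
    eLpNorm_eq_lintegral_rpow_enorm_toReal (by simp [hp0]) (by simp),
    ENNReal.toReal_ofReal hq0.le, ENNReal.toReal_ofReal hp0.le]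
  have key : ∀ x, (nnnorm ((‖f x‖ ^ (p - 2)) • f x) : ℝ≥0∞) ^ q
      = (nnnorm (f x) : ℝ≥0∞) ^ p := by
    intro x
    rw [← enorm_eq_nnnorm, ← enorm_eq_nnnorm, ← ofReal_norm, ← ofReal_norm, norm_phi p hp,
      ← ENNReal.ofReal_rpow_of_nonneg (norm_nonneg _) (by linarith : (0:ℝ) ≤ p - 1),
      ← ENNReal.rpow_mul, hpq,
      ENNReal.ofReal_rpow_of_nonneg (norm_nonneg _) (by linarith : (0:ℝ) ≤ p)]
  simp_rw [enorm_eq_nnnorm, key]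
  rw [← ENNReal.rpow_mul]
  congr 1
  field_simp

lemma memLp_phi {X : Type*} [MeasurableSpace X] {μ : Measure X} {p q : ℝ} (hp : 1 < p)
    (hq : q = p / (p - 1)) {f : X → V} (hf : MemLp f (ENNReal.ofReal p) μ) :
    MemLp (fun x => (‖f x‖ ^ (p - 2)) • f x) (ENNReal.ofReal q) μ := by
  have hp0 : (0:ℝ) < p := by linarith
  have hq0 : (0:ℝ) < q := by
    rw [hq]; exact div_pos (by linarith) (by linarith)
  refine ⟨(phi_cont p hp).comp_aestronglyMeasurable hf.1, ?_⟩
  rw [eLpNorm_phi μ p q hp hq f]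
  exact ENNReal.rpow_lt_top_of_nonneg (div_nonneg hp0.le hq0.le) hf.2.ne

end Aux

theorem stmt18 {X : Type*} [MeasurableSpace X] (μ : Measure X) [IsFiniteMeasure μ]
    {V : Type*} [NormedAddCommGroup V] [InnerProductSpace ℝ V] [FiniteDimensional ℝ V]
    (p q : ℝ) (hp : 1 < p) (hq : q = p / (p - 1))
    (T : X → V) (Ti : ℕ → X → V)
    (hT : MemLp T (ENNReal.ofReal p) μ)
    (hTi : ∀ i, MemLp (Ti i) (ENNReal.ofReal p) μ)
    (hconv : Tendsto (fun i => eLpNorm (fun x => Ti i x - T x) (ENNReal.ofReal p) μ)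
      atTop (𝓝 0)) :
    Tendsto (fun i => eLpNorm
        (fun x => (‖Ti i x‖ ^ (p - 2)) • Ti i x - (‖T x‖ ^ (p - 2)) • T x)
        (ENNReal.ofReal q) μ)
      atTop (𝓝 0) := by
  have hp0 : (0:ℝ) < p := by linarith
  have hq1 : 1 < q := by rw [hq, lt_div_iff₀ (by linarith)]; linarith
  have hq0 : (0:ℝ) < q := by linarith
  set Φ : V → V := fun v => (‖v‖ ^ (p - 2)) • v with hΦ
  have hΦc : Continuous Φ := phi_cont p hp
  -- convergence in measure of Ti to T
  have hmeas : TendstoInMeasure μ Ti atTop T := by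
    refine tendstoInMeasure_of_tendsto_eLpNorm (show ENNReal.ofReal p ≠ 0 by simp [hp0])
      (fun i => (hTi i).1) hT.1 hconv
  -- convergence in measure of Φ ∘ Ti to Φ ∘ T
  have hmeasΦ : TendstoInMeasure μ (fun i x => Φ (Ti i x)) atTop (fun x => Φ (T x)) := by
    intro ε hε
    refine tendsto_of_subseq_tendsto fun ns hns => ?_
    have hsub : TendstoInMeasure μ (fun i => Ti (ns i)) atTop T :=
      fun δ hδ => (hmeas δ hδ).comp hns
    obtain ⟨ms, hms, hae⟩ := hsub.exists_seq_tendsto_ae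
    have haeΦ : ∀ᵐ x ∂μ, Tendsto (fun n => Φ (Ti (ns (ms n)) x)) atTop (𝓝 (Φ (T x))) := by
      filter_upwards [hae] with x hx using (hΦc.tendsto _).comp hx
    have := tendstoInMeasure_of_tendsto_ae
      (f := fun n x => Φ (Ti (ns (ms n)) x)) (g := fun x => Φ (T x))
      (fun n => hΦc.comp_aestronglyMeasurable (hTi (ns (ms n))).1) haeΦ
    exact ⟨ms, this ε hε⟩
  -- uniform integrability of Φ ∘ Ti in L^q
  have hui : UnifIntegrable Ti (ENNReal.ofReal p) μ :=
    unifIntegrable_of_tendsto_Lp (by simpa using ENNReal.ofReal_le_ofReal hp.le)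
      (by simp) hTi hT hconv
  have huiΦ : UnifIntegrable (fun i x => Φ (Ti i x)) (ENNReal.ofReal q) μ := by
    intro ε hε
    obtain ⟨δ, hδ, hδ'⟩ := hui (Real.rpow_pos_of_pos hε (q / p))
    refine ⟨δ, hδ, fun i s hs hμs => ?_⟩
    have hind : s.indicator (fun x => Φ (Ti i x)) = fun x => Φ (s.indicator (Ti i) x) := by
      ext x
      by_cases hx : x ∈ s <;> simp [Set.indicator_of_mem, Set.indicator_of_notMem, hx, hΦ]
    rw [hind, eLpNorm_phi μ p q hp hq]
    calc (eLpNorm (s.indicator (Ti i)) (ENNReal.ofReal p) μ) ^ (p / q)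
        ≤ (ENNReal.ofReal (ε ^ (q / p))) ^ (p / q) :=
          ENNReal.rpow_le_rpow (hδ' i s hs hμs) (div_nonneg hp0.le hq0.le)
      _ = ENNReal.ofReal ε := by
          rw [← ENNReal.ofReal_rpow_of_nonneg hε.le (div_nonneg hq0.le hp0.le),
            ← ENNReal.rpow_mul,
            show q / p * (p / q) = 1 by field_simp,
            ENNReal.rpow_one]
  -- Vitali
  have hfinal := tendsto_Lp_finite_of_tendstoInMeasure
    (μ := μ) (p := ENNReal.ofReal q)
    (by simpa using ENNReal.ofReal_le_ofReal hq1.le) (by simp)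
    (fun i => hΦc.comp_aestronglyMeasurable (hTi i).1)
    (memLp_phi hp hq hT) huiΦ hmeasΦ
  apply hfinal.congr
  intro i
  rfl
end
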